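/- The rique-number of the complete graph K_n is at least (1 − 1/√2)(n − 2). -/

import Mathlib

namespace RiqueAux

def CrossedIn (E : Finset (ℕ × ℕ)) (u v : ℕ) : Prop :=
  ∃ e ∈ E, u < e.1 ∧ e.1 < v ∧ v < e.2

def CoveredIn (E : Finset (ℕ × ℕ)) (u v : ℕ) : Prop :=
  ∃ e ∈ E, e.1 < u ∧ v < e.2

def ValidPage (E : Finset (ℕ × ℕ)) : Prop :=
  (∀ e ∈ E, e.1 < e.2) ∧
  ∀ e ∈ E, ¬ CrossedIn E e.1 e.2 ∨ ¬ CoveredIn E e.1 e.2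

theorem noncross_card (m : ℕ) : ∀ (α β : ℕ) (S : Finset (ℕ × ℕ)),
    β - α ≤ m →
    α + 1 ≤ β →
    (∀ e ∈ S, α ≤ e.1 ∧ e.2 ≤ β ∧ e.1 + 2 ≤ e.2) →
    (∀ e₁ ∈ S, ∀ e₂ ∈ S, ¬ (e₁.1 < e₂.1 ∧ e₂.1 < e₁.2 ∧ e₁.2 < e₂.2)) →
    S.card + α + 1 ≤ β := by
  induction m with
  | zero => intro α β S hm hαβ hmem _; omega
  | succ m ih =>
    intro α β S hm hαβ hmem hnc
    rcases S.eq_empty_or_nonempty with rfl | hS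
    · simpa using hαβ
    -- pick an edge of minimal length
    obtain ⟨e₀, he₀S, he₀min⟩ := S.exists_min_image (fun e => e.2 - e.1) hS
    obtain ⟨hα₀, hβ₀, hlong₀⟩ := hmem e₀ he₀S
    set u₀ := e₀.1 with hu₀
    set v₀ := e₀.2 with hv₀
    set L := v₀ - u₀ - 1 with hL
    have hLpos : 1 ≤ L := by omega
    -- no endpoint of another edge lies strictly inside (u₀, v₀)
    have hkey : ∀ e ∈ S, e ≠ e₀ →
        (e.1 ≤ u₀ ∨ v₀ ≤ e.1) ∧ (e.2 ≤ u₀ ∨ v₀ ≤ e.2) := by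
      intro e heS hne
      obtain ⟨hαe, hβe, hlonge⟩ := hmem e heS
      have hmin := he₀min e heS
      have h1 : ¬ (u₀ < e.1 ∧ e.1 < v₀) := by
        rintro ⟨h1a, h1b⟩
        rcases lt_trichotomy e.2 v₀ with hv | hv | hv
        · omega
        · omega
        · exact hnc e₀ he₀S e heS ⟨h1a, h1b, hv⟩
      have h2 : ¬ (u₀ < e.2 ∧ e.2 < v₀) := by
        rintro ⟨h2a, h2b⟩
        rcases lt_trichotomy e.1 u₀ with hu | hu | hu
        · exact hnc e heS e₀ he₀S ⟨hu, h2a, h2b⟩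
        · omega
        · have := h1; omega
      omega
    -- contraction map
    set φ : ℕ → ℕ := fun x => if v₀ ≤ x then x - L else x with hφ
    have hφmono : ∀ x y : ℕ, (x ≤ u₀ ∨ v₀ ≤ x) → (y ≤ u₀ ∨ v₀ ≤ y) →
        (x < y ↔ φ x < φ y) := by
      intro x y hx hy
      simp only [hφ]
      split <;> split <;> omega
    set S' := (S.erase e₀).image (fun e => (φ e.1, φ e.2)) with hS'
    have hmemS' : ∀ e ∈ S.erase e₀, (e.1 ≤ u₀ ∨ v₀ ≤ e.1) ∧ (e.2 ≤ u₀ ∨ v₀ ≤ e.2) := by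
      intro e he
      exact hkey e (Finset.mem_of_mem_erase he) (Finset.ne_of_mem_erase he)
    have hinj : Set.InjOn (fun e : ℕ × ℕ => (φ e.1, φ e.2)) (S.erase e₀) := by
      intro e he f hf hef
      obtain ⟨he1, he2⟩ := hmemS' e he
      obtain ⟨hf1, hf2⟩ := hmemS' f hf
      simp only [Prod.mk.injEq] at hef
      have a1 : e.1 = f.1 := by
        by_contra hne
        rcases Nat.lt_or_ge e.1 f.1 with h | h
        · have := (hφmono e.1 f.1 he1 hf1).mp h; omega
        · rcases Nat.lt_or_ge f.1 e.1 with h' | h'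
          · have := (hφmono f.1 e.1 hf1 he1).mp h'; omega
          · omega
      have a2 : e.2 = f.2 := by
        by_contra hne
        rcases Nat.lt_or_ge e.2 f.2 with h | h
        · have := (hφmono e.2 f.2 he2 hf2).mp h; omega
        · rcases Nat.lt_or_ge f.2 e.2 with h' | h'
          · have := (hφmono f.2 e.2 hf2 he2).mp h'; omega
          · omega
      exact Prod.ext a1 a2
    have hcard' : S'.card = (S.erase e₀).card := Finset.card_image_of_injOn hinj
    have hmem' : ∀ e ∈ S', α ≤ e.1 ∧ e.2 ≤ β - L ∧ e.1 + 2 ≤ e.2 := by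
      intro e he
      simp only [hS', Finset.mem_image] at he
      obtain ⟨f, hf, rfl⟩ := he
      obtain ⟨hf1, hf2⟩ := hmemS' f hf
      have hfS := Finset.mem_of_mem_erase hf
      have hfne := Finset.ne_of_mem_erase hf
      obtain ⟨hαf, hβf, hlongf⟩ := hmem f hfS
      have hne' : f.1 ≠ u₀ ∨ f.2 ≠ v₀ := by
        by_contra h
        push_neg at h
        exact hfne (Prod.ext h.1 h.2)
      simp only [hφ]
      split <;> split <;> omega
    have hnc' : ∀ e₁ ∈ S', ∀ e₂ ∈ S', ¬ (e₁.1 < e₂.1 ∧ e₂.1 < e₁.2 ∧ e₁.2 < e₂.2) := by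
      intro e₁ h1 e₂ h2 hpat
      simp only [hS', Finset.mem_image] at h1 h2
      obtain ⟨f₁, hf₁, rfl⟩ := h1
      obtain ⟨f₂, hf₂, rfl⟩ := h2
      obtain ⟨g11, g12⟩ := hmemS' f₁ hf₁
      obtain ⟨g21, g22⟩ := hmemS' f₂ hf₂
      refine hnc f₁ (Finset.mem_of_mem_erase hf₁) f₂ (Finset.mem_of_mem_erase hf₂) ?_
      exact ⟨(hφmono _ _ g11 g21).mpr hpat.1, (hφmono _ _ g21 g12).mpr hpat.2.1,
             (hφmono _ _ g12 g22).mpr hpat.2.2⟩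
    have hIH := ih α (β - L) S' (by omega) (by omega) hmem' hnc'
    have : S.card = (S.erase e₀).card + 1 := by
      rw [Finset.card_erase_of_mem he₀S]
      have := Finset.card_pos.mpr hS
      omega
    omega

theorem seg_card (f : ℕ) : ∀ (W : Finset ℕ) (hne : W.Nonempty) (E : Finset (ℕ × ℕ)) (a s : ℕ),
    W.card ≤ f →
    (∀ w ∈ W, a + 3 ≤ w ∧ w + 1 ≤ s ∧ (a+1, w) ∈ E ∧ ¬ CrossedIn E (a+1) w) →
    (∀ e ∈ E, a + 2 ≤ e.1 → e.2 + 1 ≤ s → ¬ CrossedIn E e.1 e.2) →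
    W.card + (E.filter (fun e => a + 2 ≤ e.1 ∧ e.1 + 1 ≤ W.max' hne ∧ e.1 + 2 ≤ e.2)).card
      + a + 2 ≤ W.max' hne := by
  induction f with
  | zero =>
    intro W hne E a s hcard _ _
    exact absurd (Finset.card_pos.mpr hne) (by omega)
  | succ f ih =>
    intro W hne E a s hcard hW hunc
    set vf := W.max' hne with hvf
    have hvfW : vf ∈ W := W.max'_mem hne
    obtain ⟨hvf3, hvfs, hvfE, hvfunc⟩ := hW vf hvfW
    set M := E.filter (fun e => a + 2 ≤ e.1 ∧ e.1 + 1 ≤ vf ∧ e.1 + 2 ≤ e.2) with hM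
    -- every M-edge has right endpoint ≤ vf
    have hMv : ∀ e ∈ M, e.2 ≤ vf := by
      intro e he
      simp only [hM, Finset.mem_filter] at he
      by_contra h
      exact hvfunc ⟨e, he.1, by omega, by omega, by omega⟩
    have hMunc : ∀ e ∈ M, ¬ CrossedIn E e.1 e.2 := by
      intro e he
      have hv := hMv e he
      simp only [hM, Finset.mem_filter] at he
      exact hunc e he.1 (by omega) (by omega)
    have hMnc : ∀ e₁ ∈ M, ∀ e₂ ∈ M, ¬ (e₁.1 < e₂.1 ∧ e₂.1 < e₁.2 ∧ e₁.2 < e₂.2) := by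
      intro e₁ h1 e₂ h2 hpat
      have h2E : e₂ ∈ E := (Finset.mem_filter.mp h2).1
      exact hMunc e₁ h1 ⟨e₂, h2E, hpat.1, hpat.2.1, hpat.2.2⟩
    rcases eq_or_lt_of_le (Finset.one_le_card.mpr hne) with hone | hmore
    · -- |W| = 1 : direct noncrossing count on [a+2, vf]
      have hMmem : ∀ e ∈ M, a + 2 ≤ e.1 ∧ e.2 ≤ vf ∧ e.1 + 2 ≤ e.2 := by
        intro e he
        have hv := hMv e he
        simp only [hM, Finset.mem_filter] at he
        exact ⟨he.2.1, hv, he.2.2.2⟩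
      have := noncross_card (vf - (a+2)) (a+2) vf M le_rfl (by omega) hMmem hMnc
      omega
    · -- |W| ≥ 2
      set W' := W.erase vf with hW'
      have hne' : W'.Nonempty := by
        rw [hW']
        rcases Finset.exists_mem_ne hmore vf with ⟨w, hwW, hwne⟩
        exact ⟨w, Finset.mem_erase.mpr ⟨hwne, hwW⟩⟩
      set m' := W'.max' hne' with hm'
      have hm'W : m' ∈ W := Finset.mem_of_mem_erase (W'.max'_mem hne')
      have hm'lt : m' < vf := by
        have h1 : m' ≤ vf := W.le_max' m' hm'W
        have h2 : m' ≠ vf := Finset.ne_of_mem_erase (W'.max'_mem hne')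
        omega
      -- split M
      set M₁ := M.filter (fun e => e.1 + 1 ≤ m') with hM₁
      set M₂ := M.filter (fun e => ¬ (e.1 + 1 ≤ m')) with hM₂
      have hsplit : M₁.card + M₂.card = M.card :=
        Finset.card_filter_add_card_filter_not _
      -- M₂ : noncrossing on [m', vf]
      have hM₂mem : ∀ e ∈ M₂, m' ≤ e.1 ∧ e.2 ≤ vf ∧ e.1 + 2 ≤ e.2 := by
        intro e he
        simp only [hM₂, Finset.mem_filter] at he
        have hv := hMv e he.1
        have := Finset.mem_filter.mp he.1
        exact ⟨by omega, hv, this.2.2.2⟩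
      have hM₂nc : ∀ e₁ ∈ M₂, ∀ e₂ ∈ M₂, ¬ (e₁.1 < e₂.1 ∧ e₂.1 < e₁.2 ∧ e₁.2 < e₂.2) := by
        intro e₁ h1 e₂ h2
        exact hMnc e₁ (Finset.mem_filter.mp h1).1 e₂ (Finset.mem_filter.mp h2).1
      have hM₂count := noncross_card (vf - m') m' vf M₂ le_rfl (by omega) hM₂mem hM₂nc
      -- IH on W'
      have hWsub : ∀ w ∈ W', a + 3 ≤ w ∧ w + 1 ≤ s ∧ (a+1, w) ∈ E ∧ ¬ CrossedIn E (a+1) w :=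
        fun w hw => hW w (Finset.mem_of_mem_erase hw)
      have hWcard : W'.card = W.card - 1 := by
        rw [hW']; exact Finset.card_erase_of_mem hvfW
      have hWpos : 1 < W.card := hmore
      have hcard' : W'.card ≤ f := by omega
      have hIH := ih W' hne' E a s hcard' hWsub hunc
      -- M₁ equals the filter set used in IH
      have hM₁eq : M₁ = E.filter (fun e => a + 2 ≤ e.1 ∧ e.1 + 1 ≤ m' ∧ e.1 + 2 ≤ e.2) := by
        rw [hM₁, hM, Finset.filter_filter]
        apply Finset.filter_congr
        intro e _
        constructor
        · rintro ⟨⟨h1, h2, h3⟩, h4⟩; exact ⟨h1, h4, h3⟩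
        · rintro ⟨h1, h2, h3⟩; exact ⟨⟨h1, by omega, h3⟩, h2⟩
      rw [← hm'] at hIH
      rw [← hM₁eq] at hIH
      omega

theorem page_count (fuel : ℕ) : ∀ (E : Finset (ℕ × ℕ)) (a s hi : ℕ),
    hi - a ≤ fuel →
    ValidPage E →
    (∀ e ∈ E, e.2 ≤ hi) →
    a + 2 ≤ s → s ≤ hi →
    (∀ e ∈ E, a + 1 ≤ e.1 → e.2 + 1 ≤ s → ¬ CrossedIn E e.1 e.2) →
    (E.filter (fun e => a + 1 ≤ e.1 ∧ e.1 + 2 ≤ e.2)).card + a + s + 2 ≤ 2 * hi := by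
  induction fuel with
  | zero => intro E a s hi hm _ _ hs1 hs2 _; omega
  | succ fuel ih =>
    intro E a s hi hm hVP hhi hs1 hs2 hunc
    have hwf : ∀ e ∈ E, e.1 < e.2 := hVP.1
    set cnt := E.filter (fun e => a + 1 ≤ e.1 ∧ e.1 + 2 ≤ e.2) with hcnt
    by_cases hsmall : hi ≤ a + 2
    · -- no counted edges possible
      have : cnt = ∅ := by
        rw [hcnt, Finset.filter_eq_empty_iff]
        intro e he
        have := hhi e he
        omega
      rw [this]
      simp only [Finset.card_empty]
      omega
    push_neg at hsmall
    -- split counted by whether e.1 = a+1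
    set A := cnt.filter (fun e => e.1 = a + 1) with hA
    set B := cnt.filter (fun e => ¬ e.1 = a + 1) with hB
    have hABcard : A.card + B.card = cnt.card :=
      Finset.card_filter_add_card_filter_not _
    -- the column endpoint set (all edges from a+1)
    set col := (E.filter (fun e => e.1 = a + 1)).image Prod.snd with hcol
    -- the F-part of the column
    set W := (E.filter (fun e => e.1 = a + 1 ∧ a + 3 ≤ e.2 ∧ e.2 + 1 ≤ s)).image Prod.snd
      with hW
    have hWmem : ∀ w ∈ W, a + 3 ≤ w ∧ w + 1 ≤ s ∧ (a+1, w) ∈ E ∧ ¬ CrossedIn E (a+1) w := by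
      intro w hw
      simp only [hW, Finset.mem_image, Finset.mem_filter] at hw
      obtain ⟨e, ⟨heE, he1, he2, he3⟩, rfl⟩ := hw
      have heq : (a+1, e.2) = e := by rw [← he1]
      refine ⟨he2, he3, by rw [heq]; exact heE, ?_⟩
      have := hunc e heE (by omega) he3
      rwa [he1] at this
    -- column edge endpoints realize edges
    have hcolmem : ∀ t ∈ col, (a+1, t) ∈ E ∧ t ≤ hi := by
      intro t ht
      simp only [hcol, Finset.mem_image, Finset.mem_filter] at ht
      obtain ⟨e, ⟨heE, he1⟩, rfl⟩ := ht
      have heq : (a+1, e.2) = e := by rw [← he1]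
      exact ⟨by rw [heq]; exact heE, hhi e heE⟩
    rcases W.eq_empty_or_nonempty with hWemp | hWne
    · -- CASE B : no column F-edges
      -- A-edges all have e.2 ≥ s
      have hAmem : ∀ e ∈ A, s ≤ e.2 ∧ e.2 ∈ col := by
        intro e he
        simp only [hA, hcnt, Finset.mem_filter] at he
        obtain ⟨⟨heE, h1, h2⟩, h3⟩ := he
        constructor
        · by_contra h
          have : e.2 ∈ W := by
            simp only [hW, Finset.mem_image, Finset.mem_filter]
            exact ⟨e, ⟨heE, h3, by omega, by omega⟩, rfl⟩
          rw [hWemp] at this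
          exact absurd this (Finset.notMem_empty _)
        · simp only [hcol, Finset.mem_image, Finset.mem_filter]
          exact ⟨e, ⟨heE, h3⟩, rfl⟩
      rcases col.eq_empty_or_nonempty with hcolemp | hcolne
      · -- column totally empty : A = ∅
        have hAemp : A = ∅ := by
          rw [Finset.eq_empty_iff_forall_notMem]
          intro e he
          have := (hAmem e he).2
          rw [hcolemp] at this
          exact absurd this (Finset.notMem_empty _)
        -- recurse with a+1, s'' = max s (a+3)
        set s'' := max s (a+3) with hs''
        have hr := ih E (a+1) s'' hi (by omega) hVP hhi (by omega)
          (by rcases max_choice s (a+3) with h | h <;> omega)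
          (by
            intro e heE h1 h2
            rcases Nat.lt_or_ge (e.2+1) (s+1) with h | h
            · exact hunc e heE (by omega) (by omega)
            · have := hwf e heE
              have hcon : e.2 ≤ a + 2 := by
                rcases max_choice s (a+3) with hmx | hmx <;> omega
              omega)
        have hBeq : B = E.filter (fun e => a + 1 + 1 ≤ e.1 ∧ e.1 + 2 ≤ e.2) := by
          rw [hB, hcnt, Finset.filter_filter]
          apply Finset.filter_congr
          intro e _
          omega
        rw [← hBeq] at hr
        have hA0 : A.card = 0 := by rw [hAemp]; exact Finset.card_empty
        rcases max_choice s (a+3) with h | h <;> omega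
      · -- column nonempty, t := its max
        set t := col.max' hcolne with ht
        have htcol := col.max'_mem hcolne
        obtain ⟨htE, hthi⟩ := hcolmem t htcol
        -- count A : endpoints in [s, t]
        have hAcard : A.card ≤ t + 1 - s := by
          have himg : A.image Prod.snd ⊆ Finset.Icc s t := by
            intro x hx
            simp only [Finset.mem_image] at hx
            obtain ⟨e, he, rfl⟩ := hx
            obtain ⟨h1, h2⟩ := hAmem e he
            exact Finset.mem_Icc.mpr ⟨h1, col.le_max' _ h2⟩
          have hinj : Set.InjOn (Prod.snd : ℕ × ℕ → ℕ) ↑A := by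
            intro e he f hf hef
            simp only [hA, Finset.mem_coe, Finset.mem_filter] at he hf
            exact Prod.ext (he.2.trans hf.2.symm) hef
          calc A.card = (A.image Prod.snd).card := (Finset.card_image_of_injOn hinj).symm
            _ ≤ (Finset.Icc s t).card := Finset.card_le_card himg
            _ = t + 1 - s := Nat.card_Icc s t
        -- recurse with a+1, s'' = max (max s t) (a+3)
        set s'' := max (max s t) (a+3) with hs''
        have hcov : ∀ e ∈ E, a + 2 ≤ e.1 → e.2 + 1 ≤ s'' → ¬ CrossedIn E e.1 e.2 := by
          intro e heE h1 h2
          rcases Nat.lt_or_ge e.2 s with h | h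
          · exact hunc e heE (by omega) (by omega)
          · -- s ≤ e.2 : need e.2 < t, use cover by (a+1, t)
            rcases Nat.lt_or_ge e.2 t with h' | h'
            · have hcovd : CoveredIn E e.1 e.2 := ⟨(a+1, t), htE, by simp; omega, by simpa using h'⟩
              rcases hVP.2 e heE with hc | hc
              · exact hc
              · exact absurd hcovd hc
            · -- e.2 ≥ t and e.2 ≥ s but e.2+1 ≤ s'' : contradiction
              have := hwf e heE
              rcases max_choice s t with hmx | hmx <;>
                rcases max_choice (max s t) (a+3) with hmx2 | hmx2 <;> omega
        have hr := ih E (a+1) s'' hi (by omega) hVP hhi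
          (by rcases max_choice s t with h | h <;> rcases max_choice (max s t) (a+3) with h2 | h2 <;> omega)
          (by rcases max_choice s t with h | h <;> rcases max_choice (max s t) (a+3) with h2 | h2 <;> omega)
          hcov
        have hBeq : B = E.filter (fun e => a + 1 + 1 ≤ e.1 ∧ e.1 + 2 ≤ e.2) := by
          rw [hB, hcnt, Finset.filter_filter]
          apply Finset.filter_congr
          intro e _
          omega
        rw [← hBeq] at hr
        rcases max_choice s t with h | h <;>
          rcases max_choice (max s t) (a+3) with h2 | h2 <;> omega
    · -- CASE A : W nonempty
      set vf := W.max' hWne with hvf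
      have hvfW := W.max'_mem hWne
      obtain ⟨hvf3, hvfs, hvfE, hvfunc⟩ := hWmem vf hvfW
      have hvfcol : vf ∈ col := by
        simp only [hcol, Finset.mem_image, Finset.mem_filter]
        exact ⟨(a+1, vf), ⟨hvfE, rfl⟩, rfl⟩
      have hcolne : col.Nonempty := ⟨vf, hvfcol⟩
      set t := col.max' hcolne with ht
      have htcol := col.max'_mem hcolne
      obtain ⟨htE, hthi⟩ := hcolmem t htcol
      have hvft : vf ≤ t := col.le_max' _ hvfcol
      -- split A into AF (e.2 < s) and AG (e.2 ≥ s)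
      set AF := A.filter (fun e => e.2 + 1 ≤ s) with hAF
      set AG := A.filter (fun e => ¬ e.2 + 1 ≤ s) with hAG
      have hAFcard : AF.card + AG.card = A.card :=
        Finset.card_filter_add_card_filter_not _
      -- AF ≃ W
      have hAFW : AF.card = W.card := by
        have hAFeq : AF = E.filter (fun e => e.1 = a + 1 ∧ a + 3 ≤ e.2 ∧ e.2 + 1 ≤ s) := by
          rw [hAF, hA, hcnt, Finset.filter_filter, Finset.filter_filter]
          apply Finset.filter_congr
          intro e _
          omega
        have hinj : Set.InjOn (Prod.snd : ℕ × ℕ → ℕ)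
            ↑(E.filter (fun e => e.1 = a + 1 ∧ a + 3 ≤ e.2 ∧ e.2 + 1 ≤ s)) := by
          intro e he f hf hef
          simp only [Finset.coe_filter, Set.mem_setOf_eq] at he hf
          exact Prod.ext (he.2.1.trans hf.2.1.symm) hef
        rw [hAFeq, hW, Finset.card_image_of_injOn hinj]
      -- AG endpoints in [s, t]
      have hAGcard : AG.card ≤ t + 1 - s := by
        have himg : AG.image Prod.snd ⊆ Finset.Icc s t := by
          intro x hx
          simp only [Finset.mem_image] at hx
          obtain ⟨e, he, rfl⟩ := hx
          simp only [hAG, hA, hcnt, Finset.mem_filter] at he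
          obtain ⟨⟨⟨heE, _, _⟩, h1⟩, h2⟩ := he
          have : e.2 ∈ col := by
            simp only [hcol, Finset.mem_image, Finset.mem_filter]
            exact ⟨e, ⟨heE, h1⟩, rfl⟩
          exact Finset.mem_Icc.mpr ⟨by omega, col.le_max' _ this⟩
        have hinj : Set.InjOn (Prod.snd : ℕ × ℕ → ℕ) ↑AG := by
          intro e he f hf hef
          simp only [hAG, hA, Finset.mem_coe, Finset.mem_filter] at he hf
          exact Prod.ext (he.1.2.trans hf.1.2.symm) hef
        calc AG.card = (AG.image Prod.snd).card := (Finset.card_image_of_injOn hinj).symm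
          _ ≤ (Finset.Icc s t).card := Finset.card_le_card himg
          _ = t + 1 - s := Nat.card_Icc s t
      -- split B into B1 (mid) and B2 (tail)
      set B1 := B.filter (fun e => e.1 + 1 ≤ vf) with hB1
      set B2 := B.filter (fun e => ¬ e.1 + 1 ≤ vf) with hB2
      have hB12card : B1.card + B2.card = B.card :=
        Finset.card_filter_add_card_filter_not _
      -- B1 via seg lemma
      have hB1eq : B1 = E.filter (fun e => a + 2 ≤ e.1 ∧ e.1 + 1 ≤ vf ∧ e.1 + 2 ≤ e.2) := by
        rw [hB1, hB, hcnt, Finset.filter_filter, Finset.filter_filter]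
        apply Finset.filter_congr
        intro e _
        omega
      have hseg := seg_card W.card W hWne E a s le_rfl hWmem
        (fun e he h1 h2 => hunc e he (by omega) h2)
      rw [← hvf, ← hB1eq] at hseg
      -- B2 via recursion at (vf - 1, max s t)
      set s' := max s t with hs'
      have hcov : ∀ e ∈ E, (vf - 1) + 1 ≤ e.1 → e.2 + 1 ≤ s' → ¬ CrossedIn E e.1 e.2 := by
        intro e heE h1 h2
        rcases Nat.lt_or_ge e.2 s with h | h
        · exact hunc e heE (by omega) (by omega)
        · have h' : e.2 < t := by
            rcases max_choice s t with hmx | hmx <;> omega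
          have hcovd : CoveredIn E e.1 e.2 := ⟨(a+1, t), htE, by simp; omega, by simpa using h'⟩
          rcases hVP.2 e heE with hc | hc
          · exact hc
          · exact absurd hcovd hc
      have hr := ih E (vf - 1) s' hi (by omega) hVP hhi
        (by rcases max_choice s t with h | h <;> omega)
        (by rcases max_choice s t with h | h <;> omega)
        hcov
      have hB2eq : B2 = E.filter (fun e => (vf - 1) + 1 ≤ e.1 ∧ e.1 + 2 ≤ e.2) := by
        rw [hB2, hB, hcnt, Finset.filter_filter, Finset.filter_filter]
        apply Finset.filter_congr
        intro e _
        omega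
      rw [← hB2eq] at hr
      rcases max_choice s t with h | h <;> omega

theorem sum_card_le {β : Type*} [DecidableEq β] :
    ∀ (L : List (Finset β)) (T : Finset β), L.Pairwise Disjoint →
    (∀ S ∈ L, S ⊆ T) → (L.map Finset.card).sum ≤ T.card := by
  intro L
  induction L with
  | nil => intro T _ _; simp
  | cons S tl ih =>
    intro T hpw hsub
    have hS : S ⊆ T := hsub S (by simp)
    have hdisj := List.pairwise_cons.mp hpw
    have htl : ∀ U ∈ tl, U ⊆ T \ S := by
      intro U hU x hx
      refine Finset.mem_sdiff.mpr ⟨hsub U (by simp [hU]) hx, ?_⟩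
      intro hxS
      exact Finset.disjoint_left.mp (hdisj.1 U hU) hxS hx
    have := ih (T \ S) hdisj.2 htl
    have hcardS := Finset.card_le_card hS
    have hsd : (T \ S).card = T.card - S.card := Finset.card_sdiff_of_subset hS
    simp only [List.map_cons, List.sum_cons]
    omega

theorem count_long (fuel : ℕ) : ∀ (S : Finset (ℕ × ℕ)) (lo hi : ℕ),
    hi - lo ≤ fuel →
    (∀ e ∈ S, lo ≤ e.1 ∧ e.1 + 2 ≤ e.2 ∧ e.2 ≤ hi) →
    2 * S.card ≤ (hi - lo) * (hi - lo - 1) := by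
  induction fuel with
  | zero =>
    intro S lo hi hf hS
    have : S = ∅ := by
      rw [Finset.eq_empty_iff_forall_notMem]
      intro e he
      have := hS e he
      omega
    simp [this]
  | succ fuel ih =>
    intro S lo hi hf hS
    rcases Nat.lt_or_ge hi (lo + 2) with h | h
    · have : S = ∅ := by
        rw [Finset.eq_empty_iff_forall_notMem]
        intro e he
        have := hS e he
        omega
      simp [this]
    · set S1 := S.filter (fun e => e.2 = hi) with hS1
      set S2 := S.filter (fun e => ¬ e.2 = hi) with hS2
      have hsplit : S1.card + S2.card = S.card :=
        Finset.card_filter_add_card_filter_not _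
      have hc1 : S1.card ≤ hi - lo - 1 := by
        have himg : S1.image Prod.fst ⊆ Finset.Icc lo (hi - 2) := by
          intro x hx
          simp only [Finset.mem_image] at hx
          obtain ⟨e, he, rfl⟩ := hx
          have h1 := hS e (Finset.mem_filter.mp he).1
          have h2 := (Finset.mem_filter.mp he).2
          exact Finset.mem_Icc.mpr ⟨h1.1, by omega⟩
        have hinj : Set.InjOn (Prod.fst : ℕ × ℕ → ℕ) ↑S1 := by
          intro e he f hf hef
          simp only [hS1, Finset.mem_coe, Finset.mem_filter] at he hf
          exact Prod.ext hef (he.2.trans hf.2.symm)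
        calc S1.card = (S1.image Prod.fst).card := (Finset.card_image_of_injOn hinj).symm
          _ ≤ (Finset.Icc lo (hi - 2)).card := Finset.card_le_card himg
          _ = hi - 2 + 1 - lo := Nat.card_Icc _ _
          _ ≤ hi - lo - 1 := by omega
      have hc2 := ih S2 lo (hi - 1) (by omega) (by
        intro e he
        have h1 := hS e (Finset.mem_filter.mp he).1
        have h2 := (Finset.mem_filter.mp he).2
        exact ⟨h1.1, h1.2.1, by omega⟩)
      obtain ⟨ν, hν⟩ : ∃ ν, hi - lo = ν + 2 := ⟨hi - lo - 2, by omega⟩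
      have hkey : (hi - lo) * (hi - lo - 1) =
          (hi - 1 - lo) * (hi - 1 - lo - 1) + 2 * (hi - lo - 1) := by
        have e1 : hi - 1 - lo = ν + 1 := by omega
        have e2 : hi - lo - 1 = ν + 1 := by omega
        have e3 : hi - 1 - lo - 1 = ν := by omega
        rw [hν, e1]
        show (ν + 2) * (ν + 1) = (ν + 1) * ν + 2 * (ν + 1)
        ring
      omega

theorem sum_map_add {α : Type*} (L : List α) (f g : α → ℕ) :
    (L.map (fun x => f x + g x)).sum = (L.map f).sum + (L.map g).sum := by
  induction L with
  | nil => simp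
  | cons a tl ih => simp only [List.map_cons, List.sum_cons, ih]; omega

theorem mem_colUnion (lo : ℕ) (L : List (Finset (ℕ × ℕ))) (x : ℕ) :
    x ∈ L.foldr (fun E acc =>
      ((E.filter (fun e => e.1 = lo ∧ lo + 2 ≤ e.2)).image Prod.snd) ∪ acc) ∅
    ↔ ∃ E ∈ L, ∃ e ∈ E, e.1 = lo ∧ lo + 2 ≤ e.2 ∧ e.2 = x := by
  induction L with
  | nil => simp
  | cons E tl ih =>
    simp only [List.foldr_cons, Finset.mem_union, ih, Finset.mem_image, Finset.mem_filter,
      List.mem_cons]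
    constructor
    · rintro (⟨e, ⟨heE, h1, h2⟩, h3⟩ | ⟨F, hF, hrest⟩)
      · exact ⟨E, Or.inl rfl, e, heE, h1, h2, h3⟩
      · exact ⟨F, Or.inr hF, hrest⟩
    · rintro ⟨F, (rfl | hF), e, heE, h1, h2, h3⟩
      · exact Or.inl ⟨e, ⟨heE, h1, h2⟩, h3⟩
      · exact Or.inr ⟨F, hF, e, heE, h1, h2, h3⟩

theorem pages_count (fuel : ℕ) : ∀ (L : List (Finset (ℕ × ℕ))) (lo hi : ℕ),
    L.length + (hi - lo) ≤ fuel →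
    (∀ E ∈ L, ValidPage E) →
    (∀ E ∈ L, ∀ e ∈ E, e.2 ≤ hi) →
    L.Pairwise Disjoint →
    L.length + 2 ≤ hi - lo →
    (L.map (fun E => (E.filter (fun e => lo ≤ e.1 ∧ e.1 + 2 ≤ e.2)).card)).sum
      + L.length * L.length + 2 * L.length ≤ 2 * L.length * (hi - lo) := by
  induction fuel with
  | zero => intro L lo hi hf _ _ _ hlen; omega
  | succ fuel ih =>
    intro L lo hi hf hVP hhi hpw hlen
    by_cases hL0 : L = []
    · subst hL0; simp
    have hlenpos : 1 ≤ L.length := List.length_pos_iff.mpr hL0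
    set colSet := L.foldr (fun E acc =>
      ((E.filter (fun e => e.1 = lo ∧ lo + 2 ≤ e.2)).image Prod.snd) ∪ acc) ∅ with hcolSet
    rcases colSet.eq_empty_or_nonempty with hcse | hcs
    · -- CASE (ii) : no page has a long edge starting at lo
      have hnocol : ∀ E ∈ L, ∀ e ∈ E, ¬ (e.1 = lo ∧ lo + 2 ≤ e.2) := by
        intro E hE e heE hcon
        have : e.2 ∈ colSet := by
          rw [hcolSet, mem_colUnion]
          exact ⟨E, hE, e, heE, hcon.1, hcon.2, rfl⟩
        rw [hcse] at this
        exact absurd this (Finset.notMem_empty _)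
      have hmapeq : L.map (fun E => (E.filter (fun e => lo ≤ e.1 ∧ e.1 + 2 ≤ e.2)).card)
          = L.map (fun E => (E.filter (fun e => lo + 1 ≤ e.1 ∧ e.1 + 2 ≤ e.2)).card) := by
        apply List.map_congr_left
        intro E hE
        congr 1
        apply Finset.filter_congr
        intro e heE
        have := hnocol E hE e heE
        constructor
        · rintro ⟨h1, h2⟩
          refine ⟨?_, h2⟩
          rcases Nat.lt_or_ge lo e.1 with h | h
          · omega
          · exfalso; exact this ⟨by omega, by omega⟩
        · rintro ⟨h1, h2⟩; exact ⟨by omega, h2⟩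
      rcases Nat.lt_or_ge (L.length + 2) (hi - lo) with hbig | hbd
      · -- recurse at lo+1
        have hr := ih L (lo+1) hi (by omega) hVP hhi hpw (by omega)
        rw [hmapeq]
        have h1 : hi - (lo + 1) ≤ hi - lo := by omega
        have h2 : 2 * L.length * (hi - (lo+1)) ≤ 2 * L.length * (hi - lo) :=
          Nat.mul_le_mul_left _ h1
        omega
      · -- boundary : hi - lo = L.length + 2, trivial count
        have hb : hi - lo = L.length + 2 := by omega
        set LP := ((Finset.Icc lo hi) ×ˢ (Finset.Icc lo hi)).filter
          (fun e => lo ≤ e.1 ∧ e.1 + 2 ≤ e.2) with hLP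
        have hsub : ∀ E ∈ L, E.filter (fun e => lo ≤ e.1 ∧ e.1 + 2 ≤ e.2) ⊆ LP := by
          intro E hE e he
          obtain ⟨heE, h1, h2⟩ := Finset.mem_filter.mp he
          have h3 := hhi E hE e heE
          rw [hLP]
          refine Finset.mem_filter.mpr ⟨Finset.mem_product.mpr ⟨?_, ?_⟩, h1, h2⟩
          · exact Finset.mem_Icc.mpr ⟨h1, by omega⟩
          · exact Finset.mem_Icc.mpr ⟨by omega, h3⟩
        have hsum : (L.map (fun E => (E.filter (fun e => lo ≤ e.1 ∧ e.1 + 2 ≤ e.2)).card)).sum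
            ≤ LP.card := by
          have hpw' : (L.map (fun E => E.filter (fun e => lo ≤ e.1 ∧ e.1 + 2 ≤ e.2))).Pairwise
              Disjoint :=
            hpw.map _ (fun a b hab => Finset.disjoint_filter_filter hab)
          have := sum_card_le (L.map (fun E => E.filter (fun e => lo ≤ e.1 ∧ e.1 + 2 ≤ e.2)))
            LP hpw' (by
              intro S hS
              simp only [List.mem_map] at hS
              obtain ⟨E, hE, rfl⟩ := hS
              exact hsub E hE)
          rwa [List.map_map] at this
        have hLPcard := count_long (hi - lo) LP lo hi le_rfl (by
          intro e he
          obtain ⟨hmem, h1, h2⟩ := Finset.mem_filter.mp he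
          obtain ⟨hm1, hm2⟩ := Finset.mem_product.mp hmem
          exact ⟨h1, h2, (Finset.mem_Icc.mp hm2).2⟩)
        rw [hb] at hLPcard
        have hb1 : L.length + 2 - 1 = L.length + 1 := by omega
        rw [hb1] at hLPcard
        rw [hb]
        have e1 : (L.length + 2) * (L.length + 1)
            = L.length * L.length + 3 * L.length + 2 := by ring
        have e2 : 2 * L.length * (L.length + 2) = 2 * (L.length * L.length) + 4 * L.length := by
          ring
        nlinarith [hsum, hLPcard, hlenpos]
    · -- CASE (i) : some page has a long edge starting at lo ; take the longest
      set w := colSet.max' hcs with hw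
      obtain ⟨q, hqL, e₀, he₀q, he₀1, he₀2, he₀3⟩ :=
        (mem_colUnion lo L w).mp (by rw [← hcolSet]; exact colSet.max'_mem hcs)
      have hqedge : (lo, w) ∈ q := by
        have : (lo, w) = e₀ := by rw [← he₀1, ← he₀3]
        rw [this]; exact he₀q
      have hwhi : w ≤ hi := by
        have := hhi q hqL e₀ he₀q
        omega
      have hperm : L.Perm (q :: L.erase q) := List.perm_cons_erase hqL
      -- per-page split of the count
      have hpage : ∀ E : Finset (ℕ × ℕ),
          (E.filter (fun e => lo ≤ e.1 ∧ e.1 + 2 ≤ e.2)).card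
          = (E.filter (fun e => e.1 = lo ∧ lo + 2 ≤ e.2)).card
            + (E.filter (fun e => lo + 1 ≤ e.1 ∧ e.1 + 2 ≤ e.2)).card := by
        intro E
        set C := E.filter (fun e => lo ≤ e.1 ∧ e.1 + 2 ≤ e.2) with hC
        have h1 : C.filter (fun e => e.1 = lo)
            = E.filter (fun e => e.1 = lo ∧ lo + 2 ≤ e.2) := by
          rw [hC, Finset.filter_filter]
          apply Finset.filter_congr
          intro e _
          omega
        have h2 : C.filter (fun e => ¬ e.1 = lo)
            = E.filter (fun e => lo + 1 ≤ e.1 ∧ e.1 + 2 ≤ e.2) := by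
          rw [hC, Finset.filter_filter]
          apply Finset.filter_congr
          intro e _
          omega
        have := Finset.card_filter_add_card_filter_not
          (s := C) (p := fun e => e.1 = lo)
        rw [h1, h2] at this
        omega
      have hmapsplit : (L.map (fun E => (E.filter (fun e => lo ≤ e.1 ∧ e.1 + 2 ≤ e.2)).card)).sum
          = (L.map (fun E => (E.filter (fun e => e.1 = lo ∧ lo + 2 ≤ e.2)).card)).sum
            + (L.map (fun E => (E.filter (fun e => lo + 1 ≤ e.1 ∧ e.1 + 2 ≤ e.2)).card)).sum := by
        rw [← sum_map_add]
        congr 1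
        apply List.map_congr_left
        intro E _
        exact hpage E
      -- bound the column sum
      have hcolsum : (L.map (fun E => (E.filter (fun e => e.1 = lo ∧ lo + 2 ≤ e.2)).card)).sum
          + lo + 1 ≤ w := by
        set T := ({lo} : Finset ℕ) ×ˢ Finset.Icc (lo + 2) w with hT
        have hsub : ∀ E ∈ L, E.filter (fun e => e.1 = lo ∧ lo + 2 ≤ e.2) ⊆ T := by
          intro E hE e he
          obtain ⟨heE, h1, h2⟩ := Finset.mem_filter.mp he
          have hwle : e.2 ≤ w := by
            apply colSet.le_max'
            rw [hcolSet, mem_colUnion]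
            exact ⟨E, hE, e, heE, h1, h2, rfl⟩
          rw [hT]
          exact Finset.mem_product.mpr ⟨by simp [h1], Finset.mem_Icc.mpr ⟨h2, hwle⟩⟩
        have hpw' := hpw.map (fun E => E.filter (fun e => e.1 = lo ∧ lo + 2 ≤ e.2))
          (fun a b hab => Finset.disjoint_filter_filter hab)
        have hb := sum_card_le _ T hpw' (by
          intro S hS
          simp only [List.mem_map] at hS
          obtain ⟨E, hE, rfl⟩ := hS
          exact hsub E hE)
        rw [List.map_map] at hb
        have hTcard : T.card = w + 1 - (lo + 2) := by
          rw [hT, Finset.card_product, Finset.card_singleton, Nat.card_Icc, one_mul]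
        have : Function.comp Finset.card (fun E => E.filter (fun e => e.1 = lo ∧ lo + 2 ≤ e.2))
            = fun E : Finset (ℕ × ℕ) => (E.filter (fun e => e.1 = lo ∧ lo + 2 ≤ e.2)).card := rfl
        rw [this] at hb
        omega
      -- bound the q page by the per-page lemma
      have hqVP := hVP q hqL
      have hqunc : ∀ e ∈ q, lo + 1 ≤ e.1 → e.2 + 1 ≤ w → ¬ CrossedIn q e.1 e.2 := by
        intro e heq h1 h2
        have hcov : CoveredIn q e.1 e.2 := ⟨(lo, w), hqedge, by simpa using h1, by simpa using h2⟩
        rcases hqVP.2 e heq with hc | hc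
        · exact hc
        · exact absurd hcov hc
      have hq := page_count (hi - lo) q lo w hi le_rfl hqVP (hhi q hqL) (by omega) hwhi hqunc
      -- recursion on the rest
      have herlen : (L.erase q).length = L.length - 1 := List.length_erase_of_mem hqL
      have hpw2 : (q :: L.erase q).Pairwise Disjoint :=
        (hperm.pairwise_iff (fun {a b} h => h.symm)).mp hpw
      have hr := ih (L.erase q) (lo + 1) hi (by omega)
        (fun E hE => hVP E (List.mem_of_mem_erase hE))
        (fun E hE => hhi E (List.mem_of_mem_erase hE))
        (List.pairwise_cons.mp hpw2).2
        (by omega)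
      -- assemble
      have hrestsplit : (L.map (fun E =>
            (E.filter (fun e => lo + 1 ≤ e.1 ∧ e.1 + 2 ≤ e.2)).card)).sum
          = (q.filter (fun e => lo + 1 ≤ e.1 ∧ e.1 + 2 ≤ e.2)).card
            + ((L.erase q).map (fun E =>
              (E.filter (fun e => lo + 1 ≤ e.1 ∧ e.1 + 2 ≤ e.2)).card)).sum := by
        have := (hperm.map (fun E =>
          (E.filter (fun e => lo + 1 ≤ e.1 ∧ e.1 + 2 ≤ e.2)).card)).sum_eq
        simpa using this
      set K := (L.erase q).length with hK
      have hKlen : L.length = K + 1 := by omega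
      obtain ⟨M, hM⟩ : ∃ M, hi - (lo + 1) = M := ⟨hi - (lo+1), rfl⟩
      have hMeq : hi - lo = M + 1 := by omega
      rw [hM] at hr
      rw [hmapsplit, hrestsplit, hKlen, hMeq]
      have hlin : (L.map (fun E => (E.filter (fun e => e.1 = lo ∧ lo + 2 ≤ e.2)).card)).sum
          + (q.filter (fun e => lo + 1 ≤ e.1 ∧ e.1 + 2 ≤ e.2)).card + 1 ≤ 2 * M := by omega
      have e1 : (K+1) * (K+1) = K * K + 2 * K + 1 := by ring
      have e2 : 2 * (K+1) * (M+1) = 2 * (K * M) + 2 * K + 2 * M + 2 := by ring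
      have e3 : 2 * K * M = 2 * (K * M) := by ring
      rw [e3] at hr
      linarith [hr, hlin]

theorem sum_card_ge {β : Type*} [DecidableEq β] :
    ∀ (L : List (Finset β)) (T : Finset β),
    (∀ x ∈ T, ∃ S ∈ L, x ∈ S) → T.card ≤ (L.map Finset.card).sum := by
  intro L
  induction L with
  | nil =>
    intro T hcov
    simp only [List.map_nil, List.sum_nil, Nat.le_zero, Finset.card_eq_zero]
    rw [Finset.eq_empty_iff_forall_notMem]
    intro x hx
    obtain ⟨S, hS, _⟩ := hcov x hx
    simp at hS
  | cons S tl ih =>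
    intro T hcov
    have h1 : T ⊆ (T ∩ S) ∪ (T \ S) := by
      intro x hx
      by_cases hxS : x ∈ S
      · exact Finset.mem_union_left _ (Finset.mem_inter.mpr ⟨hx, hxS⟩)
      · exact Finset.mem_union_right _ (Finset.mem_sdiff.mpr ⟨hx, hxS⟩)
    have h2 : (T \ S).card ≤ (tl.map Finset.card).sum := by
      apply ih
      intro x hx
      obtain ⟨hxT, hxS⟩ := Finset.mem_sdiff.mp hx
      obtain ⟨U, hU, hxU⟩ := hcov x hxT
      rcases List.mem_cons.mp hU with rfl | hU'
      · exact absurd hxU hxS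
      · exact ⟨U, hU', hxU⟩
    have h3 : (T ∩ S).card ≤ S.card := Finset.card_le_card (Finset.inter_subset_right)
    calc T.card ≤ ((T ∩ S) ∪ (T \ S)).card := Finset.card_le_card h1
      _ ≤ (T ∩ S).card + (T \ S).card := Finset.card_union_le _ _
      _ ≤ S.card + (tl.map Finset.card).sum := by omega
      _ = ((S :: tl).map Finset.card).sum := by simp

theorem lt_pairs_card (m : ℕ) :
    2 * ((Finset.range m ×ˢ Finset.range m).filter (fun p => p.1 < p.2)).card
      = m * m - m := by
  set P := Finset.range m ×ˢ Finset.range m with hP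
  set A := P.filter (fun p => p.1 < p.2) with hA
  set B := P.filter (fun p => p.2 < p.1) with hB
  set D := P.filter (fun p => p.1 = p.2) with hD
  have hPcard : P.card = m * m := by
    rw [hP, Finset.card_product, Finset.card_range]
  have hDcard : D.card = m := by
    have hDeq : D = (Finset.range m).image (fun x => (x, x)) := by
      ext ⟨x, y⟩
      simp only [hD, hP, Finset.mem_filter, Finset.mem_product, Finset.mem_range,
        Finset.mem_image]
      constructor
      · rintro ⟨⟨h1, h2⟩, h3⟩; exact ⟨x, h1, by simp [h3]⟩
      · rintro ⟨a, ha, h⟩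
        have hx : a = x := congrArg Prod.fst h
        have hy : a = y := congrArg Prod.snd h
        subst hx; subst hy
        exact ⟨⟨ha, ha⟩, rfl⟩
    rw [hDeq, Finset.card_image_of_injective _ (fun a b h => congrArg Prod.fst h),
      Finset.card_range]
  have hAB : B = A.image Prod.swap := by
    ext ⟨x, y⟩
    simp only [hB, hA, hP, Finset.mem_filter, Finset.mem_product, Finset.mem_range,
      Finset.mem_image, Prod.exists, Prod.swap_prod_mk, Prod.mk.injEq]
    constructor
    · rintro ⟨⟨h1, h2⟩, h3⟩; exact ⟨y, x, ⟨⟨h2, h1⟩, h3⟩, rfl, rfl⟩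
    · rintro ⟨a, b, ⟨⟨h1, h2⟩, h3⟩, rfl, rfl⟩; exact ⟨⟨h2, h1⟩, h3⟩
  have hABcard : B.card = A.card := by
    rw [hAB]
    exact Finset.card_image_of_injective _ Prod.swap_injective
  have hsplit1 : D.card + (P.filter (fun p => ¬ p.1 = p.2)).card = P.card :=
    Finset.card_filter_add_card_filter_not _
  have hsplit2 : ((P.filter (fun p => ¬ p.1 = p.2)).filter (fun p => p.1 < p.2)).card
      + ((P.filter (fun p => ¬ p.1 = p.2)).filter (fun p => ¬ p.1 < p.2)).card
      = (P.filter (fun p => ¬ p.1 = p.2)).card :=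
    Finset.card_filter_add_card_filter_not _
  have he1 : (P.filter (fun p => ¬ p.1 = p.2)).filter (fun p => p.1 < p.2) = A := by
    rw [hA, Finset.filter_filter]
    apply Finset.filter_congr
    intro e _
    omega
  have he2 : (P.filter (fun p => ¬ p.1 = p.2)).filter (fun p => ¬ p.1 < p.2) = B := by
    rw [hB, Finset.filter_filter]
    apply Finset.filter_congr
    intro e _
    omega
  rw [he1, he2] at hsplit2
  omega

theorem long_pairs_card (n : ℕ) :
    2 * ((Finset.range n ×ˢ Finset.range n).filter (fun p => p.1 + 2 ≤ p.2)).card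
      = (n - 1) * (n - 1) - (n - 1) := by
  rcases Nat.eq_zero_or_pos n with rfl | hn
  · simp
  have himg : (Finset.range n ×ˢ Finset.range n).filter (fun p => p.1 + 2 ≤ p.2)
      = ((Finset.range (n-1) ×ˢ Finset.range (n-1)).filter (fun p => p.1 < p.2)).image
        (fun p => (p.1, p.2 + 1)) := by
    ext ⟨x, y⟩
    simp only [Finset.mem_filter, Finset.mem_product, Finset.mem_range, Finset.mem_image,
      Prod.exists, Prod.mk.injEq]
    constructor
    · rintro ⟨⟨h1, h2⟩, h3⟩
      exact ⟨x, y - 1, ⟨⟨by omega, by omega⟩, by omega⟩, rfl, by omega⟩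
    · rintro ⟨a, b, ⟨⟨h1, h2⟩, h3⟩, rfl, rfl⟩
      exact ⟨⟨by omega, by omega⟩, by omega⟩
  rw [himg, Finset.card_image_of_injective _ (by
    intro a b h
    simp only [Prod.mk.injEq] at h
    exact Prod.ext h.1 (by omega)), lt_pairs_card]

end RiqueAux

variable {V : Type*}

/-- A `k`-page rique layout of `G`: a linear vertex order and a (symmetric)
assignment of edges to `k` pages such that within each page the order avoids
the rique forbidden pattern P.1. -/
def RiqueLayout (G : SimpleGraph V) (k : ℕ) : Prop :=
  ∃ (f : V → ℕ) (page : V → V → Fin k),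
    Function.Injective f ∧ (∀ u v, page u v = page v u) ∧
    ∀ a a' b b' c c', G.Adj a a' → G.Adj b b' → G.Adj c c' →
      page a a' = page b b' → page b b' = page c c' →
      ¬ (f a < f b ∧ f b < f c ∧ f c < f b' ∧ f b' < f a' ∧ f b' < f c')

/-- The rique-number of `G`: the least number of pages of a rique layout of `G`. -/
noncomputable def riqueNumber (G : SimpleGraph V) : ℕ :=
  sInf {k | RiqueLayout G k}


namespace RiqueAux

theorem layout_exists (n : ℕ) : RiqueLayout (SimpleGraph.completeGraph (Fin n)) (n * n + 1) := by
  have hdig : ∀ x1 y1 x2 y2 : ℕ, y1 < n → y2 < n →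
      x1 * n + y1 = x2 * n + y2 → x1 = x2 ∧ y1 = y2 := by
    intro x1 y1 x2 y2 h1 h2 heq
    have hn : 0 < n := by omega
    have e1 : (y1 + x1 * n) % n = y1 := by
      rw [Nat.add_mul_mod_self_right, Nat.mod_eq_of_lt h1]
    have e2 : (y2 + x2 * n) % n = y2 := by
      rw [Nat.add_mul_mod_self_right, Nat.mod_eq_of_lt h2]
    have e3 : y1 + x1 * n = y2 + x2 * n := by omega
    have hy : y1 = y2 := by rw [← e1, ← e2, e3]
    refine ⟨?_, hy⟩
    have : x1 * n = x2 * n := by omega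
    exact Nat.eq_of_mul_eq_mul_right hn this
  refine ⟨Fin.val, fun u v => ⟨min u.val v.val * n + max u.val v.val, ?_⟩, Fin.val_injective,
    ?_, ?_⟩
  · have hu := u.isLt
    have hv := v.isLt
    have h1 : min u.val v.val + 1 ≤ n := by omega
    have h2 : (min u.val v.val + 1) * n ≤ n * n := Nat.mul_le_mul_right n h1
    have h3 : max u.val v.val < n := by omega
    have h4 : (min u.val v.val + 1) * n = min u.val v.val * n + n := by ring
    omega
  · intro u v
    apply Fin.ext
    simp [min_comm, max_comm]
  · intro a a' b b' c c' _ _ _ hp1 hp2 hlt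
    obtain ⟨l1, l2, l3, l4, l5⟩ := hlt
    have hv1 : (min a.val a'.val) * n + max a.val a'.val
        = (min b.val b'.val) * n + max b.val b'.val := congrArg Fin.val hp1
    have hmaxa : max a.val a'.val < n := by have := a.isLt; have := a'.isLt; omega
    have hmaxb : max b.val b'.val < n := by have := b.isLt; have := b'.isLt; omega
    obtain ⟨hx, hy⟩ := hdig _ _ _ _ hmaxa hmaxb hv1
    simp only [Fin.val_fin_lt] at *
    omega

theorem main_bound (n : ℕ) :
    ((1 : ℝ) - 1 / Real.sqrt 2) * ((n : ℝ) - 2) ≤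
      (riqueNumber (SimpleGraph.completeGraph (Fin n)) : ℝ) := by
  classical
  set G := SimpleGraph.completeGraph (Fin n) with hG
  set k₀ := riqueNumber G with hk₀
  have hne : {k | RiqueLayout G k}.Nonempty := ⟨n * n + 1, layout_exists n⟩
  have hmem : RiqueLayout G k₀ := Nat.sInf_mem hne
  obtain ⟨f, page, hinj, hsym, hpat⟩ := hmem
  clear_value k₀
  -- basic facts about sqrt 2
  set s := Real.sqrt 2 with hs
  have hs2 : s ^ 2 = 2 := Real.sq_sqrt (by norm_num)
  have hs0 : 0 < s := Real.sqrt_pos.mpr (by norm_num)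
  have hs1 : 1 ≤ s := by nlinarith
  have hinv : 1 / s ≤ 1 := by rw [div_le_one hs0]; exact hs1
  have hinv0 : 0 ≤ 1 / s := by positivity
  clear_value s
  by_cases hcase : n ≤ k₀ + 2
  · -- trivial case
    have hcast : (n : ℝ) ≤ (k₀ : ℝ) + 2 := by exact_mod_cast hcase
    have hk0 : (0:ℝ) ≤ (k₀ : ℝ) := by positivity
    rcases le_total ((n : ℝ) - 2) 0 with hneg | hpos
    · calc (1 - 1/s) * ((n:ℝ) - 2) ≤ 0 :=
            mul_nonpos_of_nonneg_of_nonpos (by linarith) hneg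
        _ ≤ (k₀ : ℝ) := hk0
    · calc (1 - 1/s) * ((n:ℝ) - 2) ≤ 1 * ((n:ℝ) - 2) :=
            mul_le_mul_of_nonneg_right (by linarith) hpos
        _ ≤ (k₀ : ℝ) := by linarith
  push_neg at hcase
  -- main case : k₀ + 3 ≤ n
  have hn3 : 3 ≤ n := by omega
  -- rank function
  set r : Fin n → ℕ := fun v => (Finset.univ.filter (fun w => f w < f v)).card with hr
  have hmono : ∀ u v : Fin n, f u < f v → r u < r v := by
    intro u v huv
    apply Finset.card_lt_card
    constructor
    · intro w hw
      simp only [Finset.mem_filter, Finset.mem_univ, true_and] at hw ⊢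
      omega
    · intro hsup
      have hu : u ∈ Finset.univ.filter (fun w => f w < f v) := by
        simp only [Finset.mem_filter, Finset.mem_univ, true_and]
        exact huv
      have := hsup hu
      simp only [Finset.mem_filter, Finset.mem_univ, true_and] at this
      omega
  have hiff : ∀ u v : Fin n, r u < r v ↔ f u < f v := by
    intro u v
    constructor
    · intro h
      rcases lt_trichotomy (f u) (f v) with h' | h' | h'
      · exact h'
      · have : u = v := hinj h'
        subst this; omega
      · have := hmono v u h'
        omega
    · exact hmono u v
  have hrinj : Function.Injective r := by
    intro u v huv
    by_contra hne'
    rcases lt_trichotomy (f u) (f v) with h' | h' | h'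
    · have := hmono u v h'; omega
    · exact hne' (hinj h')
    · have := hmono v u h'; omega
  have hrle : ∀ v : Fin n, r v ≤ n - 1 := by
    intro v
    have hsub : Finset.univ.filter (fun w => f w < f v) ⊆ Finset.univ.erase v := by
      intro w hw
      simp only [Finset.mem_filter, Finset.mem_univ, true_and] at hw
      refine Finset.mem_erase.mpr ⟨?_, Finset.mem_univ w⟩
      intro hwv
      subst hwv
      omega
    have := Finset.card_le_card hsub
    rw [Finset.card_erase_of_mem (Finset.mem_univ v), Finset.card_univ, Fintype.card_fin] at this
    exact this
  have hrsurj : ∀ x, x < n → ∃ v : Fin n, r v = x := by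
    intro x hx
    have himg : Finset.univ.image r = Finset.range n := by
      apply Finset.eq_of_subset_of_card_le
      · intro y hy
        simp only [Finset.mem_image] at hy
        obtain ⟨v, _, rfl⟩ := hy
        have := hrle v
        exact Finset.mem_range.mpr (by omega)
      · rw [Finset.card_range, Finset.card_image_of_injective _ hrinj, Finset.card_univ,
          Fintype.card_fin]
    have : x ∈ Finset.univ.image r := by rw [himg]; exact Finset.mem_range.mpr hx
    simp only [Finset.mem_image] at this
    obtain ⟨v, _, hv⟩ := this
    exact ⟨v, hv⟩
  -- pages
  set E : Fin k₀ → Finset (ℕ × ℕ) := fun p =>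
    ((Finset.univ : Finset (Fin n × Fin n)).filter
      (fun uv => r uv.1 < r uv.2 ∧ page uv.1 uv.2 = p)).image (fun uv => (r uv.1, r uv.2))
    with hE
  have hEmem : ∀ (p : Fin k₀) (x : ℕ × ℕ), x ∈ E p ↔
      ∃ u v : Fin n, r u < r v ∧ page u v = p ∧ (r u, r v) = x := by
    intro p x
    simp only [hE, Finset.mem_image, Finset.mem_filter, Finset.mem_univ, true_and, Prod.exists]
    constructor
    · rintro ⟨u, v, ⟨h1, h2⟩, h3⟩; exact ⟨u, v, h1, h2, h3⟩
    · rintro ⟨u, v, h1, h2, h3⟩; exact ⟨u, v, ⟨h1, h2⟩, h3⟩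
  have hadj : ∀ u v : Fin n, u ≠ v → G.Adj u v := by
    intro u v huv
    rw [hG]
    exact huv
  have hVP : ∀ p, ValidPage (E p) := by
    intro p
    constructor
    · intro e he
      obtain ⟨u, v, h1, _, h3⟩ := (hEmem p e).mp he
      rw [← h3]
      exact h1
    · intro e he
      by_cases hcr : CrossedIn (E p) e.1 e.2
      · right
        intro hcov
        obtain ⟨b, b', hbb1, hbb2, hbb3⟩ := (hEmem p e).mp he
        obtain ⟨g, hg, hg1, hg2, hg3⟩ := hcr
        obtain ⟨c, c', hcc1, hcc2, hcc3⟩ := (hEmem p g).mp hg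
        obtain ⟨h, hh, hh1, hh2⟩ := hcov
        obtain ⟨a, a', haa1, haa2, haa3⟩ := (hEmem p h).mp hh
        have eb1 : r b = e.1 := congrArg Prod.fst hbb3
        have eb2 : r b' = e.2 := congrArg Prod.snd hbb3
        have ec1 : r c = g.1 := congrArg Prod.fst hcc3
        have ec2 : r c' = g.2 := congrArg Prod.snd hcc3
        have ea1 : r a = h.1 := congrArg Prod.fst haa3
        have ea2 : r a' = h.2 := congrArg Prod.snd haa3
        -- f inequalities
        have i1 : f a < f b := (hiff a b).mp (by omega)
        have i2 : f b < f c := (hiff b c).mp (by omega)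
        have i3 : f c < f b' := (hiff c b').mp (by omega)
        have i4 : f b' < f a' := (hiff b' a').mp (by omega)
        have i5 : f b' < f c' := (hiff b' c').mp (by omega)
        have hA1 : G.Adj a a' := hadj a a' (fun hq => by subst hq; omega)
        have hA2 : G.Adj b b' := hadj b b' (fun hq => by subst hq; omega)
        have hA3 : G.Adj c c' := hadj c c' (fun hq => by subst hq; omega)
        exact hpat a a' b b' c c' hA1 hA2 hA3 (haa2.trans hbb2.symm) (hbb2.trans hcc2.symm)
          ⟨i1, i2, i3, i4, i5⟩
      · left; exact hcr
  have hdisj : ∀ p q : Fin k₀, p ≠ q → Disjoint (E p) (E q) := by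
    intro p q hpq
    rw [Finset.disjoint_left]
    intro x hxp hxq
    obtain ⟨u, v, h1, h2, h3⟩ := (hEmem p x).mp hxp
    obtain ⟨u', v', h1', h2', h3'⟩ := (hEmem q x).mp hxq
    have hu : r u = r u' := by
      have := congrArg Prod.fst h3
      have := congrArg Prod.fst h3'
      omega
    have hv : r v = r v' := by
      have := congrArg Prod.snd h3
      have := congrArg Prod.snd h3'
      omega
    have : u = u' := hrinj hu
    have : v = v' := hrinj hv
    subst this
    subst ‹u = u'›
    exact hpq (h2 ▸ h2')
  set L := (List.finRange k₀).map E with hL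
  have hlenL : L.length = k₀ := by simp [hL]
  have hVPL : ∀ Ep ∈ L, ValidPage Ep := by
    intro Ep hEp
    simp only [hL, List.mem_map] at hEp
    obtain ⟨p, _, rfl⟩ := hEp
    exact hVP p
  have hhiL : ∀ Ep ∈ L, ∀ e ∈ Ep, e.2 ≤ n - 1 := by
    intro Ep hEp e he
    simp only [hL, List.mem_map] at hEp
    obtain ⟨p, _, rfl⟩ := hEp
    obtain ⟨u, v, _, _, h3⟩ := (hEmem p e).mp he
    have := hrle v
    have := congrArg Prod.snd h3
    simp only at this
    omega
  have hpwL : L.Pairwise Disjoint := by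
    rw [hL]
    apply List.Pairwise.map
    · intro a b hab
      exact hdisj a b hab
    · exact (List.nodup_finRange k₀)
  have hpc := pages_count (k₀ + n) L 0 (n-1) (by omega) hVPL hhiL hpwL (by omega)
  rw [hlenL] at hpc
  simp only [Nat.sub_zero] at hpc
  -- coverage of all long pairs
  set LP := (Finset.range n ×ˢ Finset.range n).filter (fun p => p.1 + 2 ≤ p.2) with hLP
  have hcover : LP.card ≤
      (L.map (fun Ep => (Ep.filter (fun e => 0 ≤ e.1 ∧ e.1 + 2 ≤ e.2)).card)).sum := by
    have := sum_card_ge (L.map (fun Ep => Ep.filter (fun e => 0 ≤ e.1 ∧ e.1 + 2 ≤ e.2))) LP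
      (by
        intro x hx
        obtain ⟨hmem', hlong⟩ := Finset.mem_filter.mp hx
        obtain ⟨hx1, hx2⟩ := Finset.mem_product.mp hmem'
        obtain ⟨u, hu⟩ := hrsurj x.1 (Finset.mem_range.mp hx1)
        obtain ⟨v, hv⟩ := hrsurj x.2 (Finset.mem_range.mp hx2)
        refine ⟨(E (page u v)).filter (fun e => 0 ≤ e.1 ∧ e.1 + 2 ≤ e.2), ?_, ?_⟩
        · simp only [List.mem_map, hL]
          exact ⟨E (page u v), ⟨page u v, List.mem_finRange _, rfl⟩, rfl⟩
        · refine Finset.mem_filter.mpr ⟨?_, by omega, by omega⟩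
          rw [hEmem]
          exact ⟨u, v, by omega, rfl, by rw [hu, hv]⟩)
    rwa [List.map_map] at this
  have hLPcard := long_pairs_card n
  rw [← hLP] at hLPcard
  -- put the count together in ℕ
  have hnat : (n-1) * (n-1) - (n-1) + 2 * (k₀ * k₀) + 4 * k₀ ≤ 2 * (2 * k₀ * (n-1)) := by
    have h2 : 2 * ((L.map (fun Ep =>
        (Ep.filter (fun e => 0 ≤ e.1 ∧ e.1 + 2 ≤ e.2)).card)).sum)
        + 2 * (k₀ * k₀) + 4 * k₀ ≤ 2 * (2 * k₀ * (n-1)) := by omega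
    omega
  -- move to ℝ
  have hsub : (n:ℝ) - 1 = ((n-1 : ℕ) : ℝ) := by
    have : 1 ≤ n := by omega
    push_cast [this]
    ring
  have hreal : ((n:ℝ)-1) * ((n:ℝ)-1) - ((n:ℝ)-1) + 2 * ((k₀:ℝ) * k₀) + 4 * k₀
      ≤ 2 * (2 * (k₀:ℝ) * ((n:ℝ)-1)) := by
    have hle : (n-1 : ℕ) ≤ (n-1) * (n-1) := Nat.le_mul_of_pos_left _ (by omega)
    have := hnat
    zify [hle] at this
    rw [hsub]
    exact_mod_cast this
  -- final arithmetic
  set N := (n:ℝ) - 2 with hN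
  clear_value N
  have hN1 : 1 ≤ N := by
    rw [hN]
    have : (3:ℝ) ≤ (n:ℝ) := by exact_mod_cast hn3
    linarith
  have hKN : (k₀:ℝ) ≤ N - 1 := by
    rw [hN]
    have : (k₀:ℝ) + 3 ≤ (n:ℝ) := by exact_mod_cast hcase
    linarith
  have hNn : (n:ℝ) - 1 = N + 1 := by rw [hN]; ring
  rw [hNn] at hreal
  clear hcover hpc hLPcard hnat hEmem hadj hVP hdisj hVPL hhiL hpwL hrsurj hrle hrinj hiff
    hmono hpat hsym hinj hsub hNn hlenL hL hLP hE hr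
  clear L LP E r page f hne hk₀ hG
  clear G
  have h2a : 2 * (N - (k₀:ℝ))^2 ≤ N^2 := by nlinarith
  have hsa : s * (N - (k₀:ℝ)) ≤ N := by
    have hsq : (s * (N - (k₀:ℝ)))^2 ≤ N^2 := by
      rw [mul_pow, hs2]
      nlinarith
    have h1 : 0 ≤ s * (N - (k₀:ℝ)) := by
      apply mul_nonneg hs0.le
      linarith
    have h2 : 0 ≤ N := by linarith
    have h3 := Real.sqrt_le_sqrt hsq
    rwa [Real.sqrt_sq h1, Real.sqrt_sq h2] at h3
  have hgoal : (1 - 1/s) * N ≤ (k₀:ℝ) := by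
    have hdiv : N - (k₀:ℝ) ≤ N / s := by
      rw [le_div_iff₀ hs0]
      linarith [hsa]
    have hexp : (1 - 1/s) * N = N - N / s := by
      field_simp
    linarith
  exact hgoal

end RiqueAux

/-- The rique-number of `K_n` is at least `(1 − 1/√2)(n − 2)`. -/
theorem riqueNumber_complete_lower_bound (n : ℕ) :
    ((1 : ℝ) - 1 / Real.sqrt 2) * ((n : ℝ) - 2) ≤
      (riqueNumber (SimpleGraph.completeGraph (Fin n)) : ℝ) :=
  RiqueAux.main_bound n
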